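/- Let p be a prime and let G be the GGS-group over the p-adic tree with constant defining vector e = (1, 1, ..., 1). Then G is strongly fractal but not super strongly fractal. -/

import Mathlib

open Equiv

theorem Equiv.Perm.apply_inv_self {α : Type*} (f : Equiv.Perm α) (x : α) : f (f⁻¹ x) = x :=
  f.apply_symm_apply x

theorem Equiv.Perm.inv_apply_self {α : Type*} (f : Equiv.Perm α) (x : α) : f⁻¹ (f x) = x :=
  f.symm_apply_apply x

namespace TreeFract

variable {X : Type*}

/-- The automorphism group of the rooted `d`-adic tree with vertex set the free
monoid `List X`: permutations of the vertex set fixing the root and sending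
children of a vertex to children of its image (this is exactly incidence
preservation for the rooted tree). -/
def AutT (X : Type*) : Subgroup (Equiv.Perm (List X)) where
  carrier := {g | g [] = [] ∧ ∀ (u : List X) (x : X), ∃ y : X, g (u ++ [x]) = g u ++ [y]}
  one_mem' := ⟨rfl, fun _ x => ⟨x, rfl⟩⟩
  mul_mem' := by
    rintro f g ⟨hf1, hf2⟩ ⟨hg1, hg2⟩
    refine ⟨?_, fun u x => ?_⟩
    · show f (g []) = []
      rw [hg1, hf1]
    · obtain ⟨y, hy⟩ := hg2 u x
      obtain ⟨z, hz⟩ := hf2 (g u) y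
      exact ⟨z, by show f (g (u ++ [x])) = f (g u) ++ [z]; rw [hy, hz]⟩
  inv_mem' := by
    rintro g ⟨hg1, hg2⟩
    have hinj := g.injective
    refine ⟨?_, fun u x => ?_⟩
    · apply hinj
      show g (g⁻¹ []) = g []
      rw [Equiv.Perm.apply_inv_self, hg1]
    · have hne : g⁻¹ (u ++ [x]) ≠ [] := by
        intro h
        have h2 : u ++ [x] = g [] := by
          conv_lhs => rw [← Equiv.Perm.apply_inv_self g (u ++ [x]), h]
        rw [hg1] at h2
        simp at h2
      obtain ⟨y, hy⟩ : ∃ y, g⁻¹ (u ++ [x]) = (g⁻¹ (u ++ [x])).dropLast ++ [y] :=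
        ⟨(g⁻¹ (u ++ [x])).getLast hne, (List.dropLast_append_getLast hne).symm⟩
      obtain ⟨z, hz⟩ := hg2 ((g⁻¹ (u ++ [x])).dropLast) y
      have happ : g ((g⁻¹ (u ++ [x])).dropLast) ++ [z] = u ++ [x] := by
        rw [← hz, ← hy, Equiv.Perm.apply_inv_self]
      have h2 : g ((g⁻¹ (u ++ [x])).dropLast) = u ∧ ([z] : List X) = [x] :=
        List.append_inj' happ rfl
      refine ⟨y, ?_⟩
      rw [hy]
      congr 1
      apply hinj
      rw [Equiv.Perm.apply_inv_self, h2.1]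

/-- The underlying function of the section of `g` at the vertex `u`. -/
def sectFun (g : Equiv.Perm (List X)) (u : List X) : List X → List X :=
  fun v => (g (u ++ v)).drop (g u).length

open scoped Classical in
/-- The section `g_u` of a tree automorphism `g` at a vertex `u`, i.e. the unique
automorphism with `g (u ++ v) = g u ++ g_u v` for all `v`.  (By convention it is
the identity for permutations which are not tree automorphisms.) -/
noncomputable def sect (g : Equiv.Perm (List X)) (u : List X) : Equiv.Perm (List X) :=
  if h : Function.Bijective (sectFun g u) then Equiv.ofBijective _ h else 1

/-- The underlying function of the label of `g` at the vertex `u`. -/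
def labelFun (g : Equiv.Perm (List X)) (u : List X) : X → X :=
  fun x => (g (u ++ [x])).getLastD x

open scoped Classical in
/-- The label `g_(u)` of a tree automorphism `g` at a vertex `u`: the permutation
of `X` with `g (u ++ [x]) = g u ++ [g_(u) x]`.  (By convention it is the identity
for permutations which are not tree automorphisms.) -/
noncomputable def label (g : Equiv.Perm (List X)) (u : List X) : Equiv.Perm X :=
  if h : Function.Bijective (labelFun g u) then Equiv.ofBijective _ h else 1

/-- The stabilizer `st_G(u)` of the vertex `u` in `G`. -/
def stV (G : Subgroup (Equiv.Perm (List X))) (u : List X) : Subgroup (Equiv.Perm (List X)) where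
  carrier := {g | g ∈ G ∧ g u = u}
  one_mem' := ⟨one_mem G, rfl⟩
  mul_mem' := by
    rintro f g ⟨hf, hf2⟩ ⟨hg, hg2⟩
    exact ⟨mul_mem hf hg, by show f (g u) = u; rw [hg2, hf2]⟩
  inv_mem' := by
    rintro g ⟨hg, hg2⟩
    refine ⟨inv_mem hg, ?_⟩
    apply g.injective
    show g (g⁻¹ u) = g u
    rw [Equiv.Perm.apply_inv_self, hg2]

/-- The stabilizer `st_G(L_n)` of the `n`-th level in `G`. -/
def stL (G : Subgroup (Equiv.Perm (List X))) (n : ℕ) : Subgroup (Equiv.Perm (List X)) where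
  carrier := {g | g ∈ G ∧ ∀ u : List X, u.length = n → g u = u}
  one_mem' := ⟨one_mem G, fun _ _ => rfl⟩
  mul_mem' := by
    rintro f g ⟨hf, hf2⟩ ⟨hg, hg2⟩
    exact ⟨mul_mem hf hg, fun u hu => by show f (g u) = u; rw [hg2 u hu, hf2 u hu]⟩
  inv_mem' := by
    rintro g ⟨hg, hg2⟩
    refine ⟨inv_mem hg, fun u hu => ?_⟩
    apply g.injective
    show g (g⁻¹ u) = g u
    rw [Equiv.Perm.apply_inv_self, hg2 u hu]

/-- `G` is self-similar: sections of elements of `G` lie in `G`. -/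
def SelfSimilar (G : Subgroup (Equiv.Perm (List X))) : Prop :=
  ∀ g ∈ G, ∀ u : List X, sect g u ∈ G

/-- `G` acts transitively on the first level of the tree. -/
def FirstLevelTransitive (G : Subgroup (Equiv.Perm (List X))) : Prop :=
  ∀ x y : X, ∃ g ∈ G, g [x] = [y]

/-- `G` is level transitive: it acts transitively on every level of the tree. -/
def LevelTransitive (G : Subgroup (Equiv.Perm (List X))) : Prop :=
  ∀ (n : ℕ) (u v : List X), u.length = n → v.length = n → ∃ g ∈ G, g u = v

/-- `G` is fractal: `ψ_u(st_G(u)) = G` for every vertex `u`. -/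
def Fractal (G : Subgroup (Equiv.Perm (List X))) : Prop :=
  ∀ u : List X,
    (fun g => sect g u) '' (stV G u : Set (Equiv.Perm (List X))) = (G : Set (Equiv.Perm (List X)))

/-- `G` is strongly fractal: `ψ_x(st_G(L_1)) = G` for every first-level vertex `x`. -/
def StronglyFractal (G : Subgroup (Equiv.Perm (List X))) : Prop :=
  ∀ x : X,
    (fun g => sect g [x]) '' (stL G 1 : Set (Equiv.Perm (List X))) = (G : Set (Equiv.Perm (List X)))

/-- `G` is super strongly fractal: `ψ_u(st_G(L_n)) = G` for every `n` and every `u ∈ L_n`. -/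
def SuperStronglyFractal (G : Subgroup (Equiv.Perm (List X))) : Prop :=
  ∀ (n : ℕ) (u : List X), u.length = n →
    (fun g => sect g u) '' (stL G n : Set (Equiv.Perm (List X))) = (G : Set (Equiv.Perm (List X)))

/-- The normal closure `⟨S⟩^G` of a subset `S ⊆ G` in the subgroup `G`, realized as a
subgroup of the ambient group: the subgroup generated by all `G`-conjugates of `S`. -/
def normalClosureIn (G : Subgroup (Equiv.Perm (List X))) (S : Set (Equiv.Perm (List X))) :
    Subgroup (Equiv.Perm (List X)) :=
  Subgroup.closure {t | ∃ g ∈ G, ∃ s ∈ S, t = g * s * g⁻¹}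

end TreeFract
namespace TreeFract

/-! ### The Hanoi towers generators -/

section Hanoi

variable {d : ℕ}

/-- The underlying function of the automorphism `a_{ij}` of the Hanoi Towers group:
it swaps the first occurrence of `i` or `j` in a word. -/
def hanoiFun (i j : Fin d) : List (Fin d) → List (Fin d)
  | [] => []
  | x :: w => if x = i then j :: w else if x = j then i :: w else x :: hanoiFun i j w

lemma hanoiFun_invol (i j : Fin d) : ∀ w, hanoiFun i j (hanoiFun i j w) = w
  | [] => rfl
  | x :: w => by
    by_cases h1 : x = i
    · subst h1
      by_cases h2 : j = x
      · simp [hanoiFun, h2]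
      · simp [hanoiFun, h2]
    · by_cases h2 : x = j
      · subst h2
        simp [hanoiFun, h1]
      · simp [hanoiFun, h1, h2, hanoiFun_invol i j w]

/-- The automorphism `a_{ij}` of the `d`-adic tree: its label at the root is the
transposition `(x_i x_j)`, its sections at the first-level vertices `x_i` and `x_j`
are trivial and all its other first-level sections equal `a_{ij}` again. -/
def hanoiA (i j : Fin d) : Equiv.Perm (List (Fin d)) :=
  ⟨hanoiFun i j, hanoiFun i j, hanoiFun_invol i j, hanoiFun_invol i j⟩

end Hanoi

/-- The generator `b_i = a_{i,i+1}` (here `i` runs through `0, …, d-2`,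
corresponding to the paper's `b_1, …, b_{d-1}`). -/
def hanoiB (d : ℕ) (i : ℕ) (h : i + 1 < d) : Equiv.Perm (List (Fin d)) :=
  hanoiA ⟨i, Nat.lt_of_succ_lt h⟩ ⟨i + 1, h⟩

/-- The subgroup `G = ⟨b_1, …, b_{d-1}⟩` of the Hanoi Towers group. -/
def hanoiGroup (d : ℕ) : Subgroup (Equiv.Perm (List (Fin d))) :=
  Subgroup.closure {g | ∃ (i : ℕ) (h : i + 1 < d), g = hanoiB d i h}

/-! ### GGS groups (and the rooted automorphism `a`) -/

section GGS

variable {p : ℕ}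

/-- The function adding `m` to the first letter of a word over `ZMod p`. -/
def rotFun (m : ZMod p) : List (ZMod p) → List (ZMod p)
  | [] => []
  | x :: w => (x + m) :: w

/-- The rooted automorphism of the `p`-adic tree whose label at the root is the
`p`-cycle `x ↦ x + m`; for `m = 1` this is the generator `a` of a GGS-group
(identifying `x_i` with `i mod p`). -/
def rotPerm (m : ZMod p) : Equiv.Perm (List (ZMod p)) :=
  ⟨rotFun m, rotFun (-m),
    by intro w; cases w <;> simp [rotFun],
    by intro w; cases w <;> simp [rotFun]⟩

/-- The underlying function of the GGS generator `b` with defining vector `e`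
(the value `e 0` is irrelevant; `e i` for `i ≠ 0` are the coordinates
`e_1, …, e_{p-1}`): `b` fixes the first level, its section at `x_i` is
`a^{e_i}` for `i = 1, …, p-1` and its section at `x_p` (identified with `0`)
is `b` again. -/
def ggsFun (e : ZMod p → ZMod p) : List (ZMod p) → List (ZMod p)
  | [] => []
  | x :: w => if x = 0 then x :: ggsFun e w else x :: rotFun (e x) w

lemma ggsFun_inv (e : ZMod p → ZMod p) : ∀ w, ggsFun (fun i => -(e i)) (ggsFun e w) = w
  | [] => rfl
  | x :: w => by
    by_cases h : x = 0
    · simp only [ggsFun, if_pos h]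
      rw [ggsFun_inv e w]
    · simp only [ggsFun, if_neg h]
      cases w <;> simp [rotFun]

/-- The GGS generator `b` with defining vector `e`, as a tree automorphism. -/
def ggsB (e : ZMod p → ZMod p) : Equiv.Perm (List (ZMod p)) :=
  ⟨ggsFun e, ggsFun (fun i => -(e i)), ggsFun_inv e, by
    intro w
    have h := ggsFun_inv (fun i => -(e i)) w
    simpa using h⟩

end GGS

/-- The GGS-group `G = ⟨a, b⟩` over the `p`-adic tree with defining vector `e`. -/
def ggsGroup (p : ℕ) (e : ZMod p → ZMod p) : Subgroup (Equiv.Perm (List (ZMod p))) :=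
  Subgroup.closure {rotPerm 1, ggsB e}

/-! ### The first Grigorchuk group -/

/-- The three directed generators `b, c, d` (for `k % 3 = 0, 1, 2` respectively) of the
first Grigorchuk group, defined by the mutual recursion
`b = (a, c)`, `c = (a, d)`, `d = (1, b)` (identifying `x_1` with `0` and `x_2` with `1`). -/
def griFun : ℕ → List (ZMod 2) → List (ZMod 2)
  | _, [] => []
  | k, x :: w => if x = 0 then (if k % 3 = 2 then x :: w else x :: rotFun 1 w)
                 else x :: griFun (k + 1) w

lemma griFun_invol : ∀ (w : List (ZMod 2)) (k : ℕ), griFun k (griFun k w) = w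
  | [], _ => rfl
  | x :: w, k => by
    by_cases h : x = 0
    · by_cases h3 : k % 3 = 2
      · simp [griFun, h, h3]
      · simp only [griFun, if_pos h, if_neg h3]
        cases w with
        | nil => rfl
        | cons y v =>
            have hy : y + 1 + 1 = y := by
              rw [add_assoc]
              simp [show (1 : ZMod 2) + 1 = 0 from rfl]
            simp [rotFun, hy]
    · simp only [griFun, if_neg h]
      rw [griFun_invol w (k + 1)]

/-- The generator `b` of the first Grigorchuk group, with sections `(a, c)`. -/
def griB : Equiv.Perm (List (ZMod 2)) :=
  ⟨griFun 0, griFun 0, fun w => griFun_invol w 0, fun w => griFun_invol w 0⟩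

/-- The generator `c` of the first Grigorchuk group, with sections `(a, d)`. -/
def griC : Equiv.Perm (List (ZMod 2)) :=
  ⟨griFun 1, griFun 1, fun w => griFun_invol w 1, fun w => griFun_invol w 1⟩

/-- The generator `d` of the first Grigorchuk group, with sections `(1, b)`. -/
def griD : Equiv.Perm (List (ZMod 2)) :=
  ⟨griFun 2, griFun 2, fun w => griFun_invol w 2, fun w => griFun_invol w 2⟩

/-- The first Grigorchuk group `𝒢 = ⟨a, b, c, d⟩` acting on the binary tree. -/
def grigorchukGroup : Subgroup (Equiv.Perm (List (ZMod 2))) :=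
  Subgroup.closure {rotPerm 1, griB, griC, griD}

end TreeFract

namespace TreeFract

/-! ### Auxiliary lemmas on tree automorphisms and sections -/

section SectLemmas

variable {X : Type*} {g f : Equiv.Perm (List X)}

lemma mem_AutT {g : Equiv.Perm (List X)} :
    g ∈ AutT X ↔ g [] = [] ∧ ∀ (u : List X) (x : X), ∃ y : X, g (u ++ [x]) = g u ++ [y] :=
  Iff.rfl

lemma autT_len (hg : g ∈ AutT X) : ∀ w : List X, (g w).length = w.length := by
  intro w
  induction w using List.reverseRecOn with
  | nil => rw [(mem_AutT.1 hg).1]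
  | append_singleton u x ih =>
      obtain ⟨y, hy⟩ := (mem_AutT.1 hg).2 u x
      simp [hy, ih]

lemma autT_append (hg : g ∈ AutT X) (u v : List X) :
    g (u ++ v) = g u ++ sectFun g u v := by
  have h : ∃ w, g (u ++ v) = g u ++ w := by
    induction v using List.reverseRecOn with
    | nil => exact ⟨[], by simp⟩
    | append_singleton v x ih =>
        obtain ⟨w, hw⟩ := ih
        obtain ⟨y, hy⟩ := (mem_AutT.1 hg).2 (u ++ v) x
        exact ⟨w ++ [y], by rw [← List.append_assoc, hy, hw, List.append_assoc]⟩
  obtain ⟨w, hw⟩ := h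
  rw [hw]
  congr 1
  have h2 : (g (u ++ v)).drop (g u).length = w := by rw [hw, List.drop_left]
  exact h2.symm

lemma sectFun_cancel (hg : g ∈ AutT X) (u : List X) :
    ∀ v, sectFun g⁻¹ (g u) (sectFun g u v) = v := by
  intro v
  have h1 : g (u ++ v) = g u ++ sectFun g u v := autT_append hg u v
  have h2 : g⁻¹ (g u ++ sectFun g u v) = g⁻¹ (g u) ++ sectFun g⁻¹ (g u) (sectFun g u v) :=
    autT_append ((AutT X).inv_mem hg) (g u) _
  rw [← h1, Equiv.Perm.inv_apply_self, Equiv.Perm.inv_apply_self] at h2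
  exact (List.append_cancel_left h2).symm

lemma sectFun_bijective (hg : g ∈ AutT X) (u : List X) :
    Function.Bijective (sectFun g u) := by
  have hinv := (AutT X).inv_mem hg
  refine Function.bijective_iff_has_inverse.2 ⟨sectFun g⁻¹ (g u), sectFun_cancel hg u, ?_⟩
  intro w
  have h := sectFun_cancel hinv (g u) w
  rwa [inv_inv, Equiv.Perm.inv_apply_self] at h

lemma sect_apply (hg : g ∈ AutT X) (u v : List X) : sect g u v = sectFun g u v := by
  rw [sect, dif_pos (sectFun_bijective hg u)]
  rfl

lemma sect_spec (hg : g ∈ AutT X) (u v : List X) : g (u ++ v) = g u ++ sect g u v := by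
  rw [sect_apply hg]
  exact autT_append hg u v

lemma sect_one (u : List X) : sect (1 : Equiv.Perm (List X)) u = 1 := by
  refine Equiv.ext fun v => ?_
  rw [sect_apply (one_mem _) u v]
  show ((1 : Equiv.Perm (List X)) (u ++ v)).drop
      ((1 : Equiv.Perm (List X)) u).length = (1 : Equiv.Perm (List X)) v
  simp

lemma sect_mul (hf : f ∈ AutT X) (hg : g ∈ AutT X) (u : List X) :
    sect (f * g) u = sect f (g u) * sect g u := by
  have hfg : f * g ∈ AutT X := mul_mem hf hg
  refine Equiv.ext fun v => ?_
  rw [sect_apply hfg, Equiv.Perm.mul_apply, sect_apply hg, sect_apply hf]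
  show ((f * g) (u ++ v)).drop ((f * g) u).length = sectFun f (g u) (sectFun g u v)
  rw [Equiv.Perm.mul_apply, Equiv.Perm.mul_apply, autT_append hg u v,
    autT_append hf (g u) _, List.drop_left]

lemma sect_inv (hg : g ∈ AutT X) (u : List X) :
    sect g⁻¹ u = (sect g (g⁻¹ u))⁻¹ := by
  have h := sect_mul hg ((AutT X).inv_mem hg) u
  rw [mul_inv_cancel, sect_one] at h
  exact eq_inv_of_mul_eq_one_right h.symm

lemma sect_nil (hg : g ∈ AutT X) : sect g [] = g := by
  refine Equiv.ext fun v => ?_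
  rw [sect_apply hg]
  show (g ([] ++ v)).drop (g []).length = g v
  rw [(mem_AutT.1 hg).1]
  simp

lemma sect_mem_AutT (hg : g ∈ AutT X) (u : List X) : sect g u ∈ AutT X := by
  rw [mem_AutT]
  constructor
  · rw [sect_apply hg]
    show (g (u ++ [])).drop (g u).length = []
    simp
  · intro w x
    obtain ⟨y, hy⟩ := (mem_AutT.1 hg).2 (u ++ w) x
    refine ⟨y, ?_⟩
    rw [sect_apply hg, sect_apply hg]
    show (g (u ++ (w ++ [x]))).drop (g u).length
        = (g (u ++ w)).drop (g u).length ++ [y]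
    rw [← List.append_assoc, hy, autT_append hg u w, List.append_assoc, List.drop_left,
      List.drop_left]

lemma sect_append (hg : g ∈ AutT X) (u v : List X) :
    sect g (u ++ v) = sect (sect g u) v := by
  have hsu := sect_mem_AutT hg u
  refine Equiv.ext fun w => ?_
  rw [sect_apply hg (u ++ v) w, sect_apply hsu v w]
  show (g (u ++ v ++ w)).drop (g (u ++ v)).length
      = ((sect g u) (v ++ w)).drop ((sect g u) v).length
  rw [sect_apply hg u (v ++ w), sect_apply hg u v]
  have lu : (g u).length = u.length := autT_len hg u
  have luv : (g (u ++ v)).length = u.length + v.length := by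
    rw [autT_len hg, List.length_append]
  have lsv : (sectFun g u v).length = v.length := by
    show ((g (u ++ v)).drop (g u).length).length = v.length
    rw [List.length_drop, luv, lu]
    omega
  show (g (u ++ v ++ w)).drop (g (u ++ v)).length
      = ((g (u ++ (v ++ w))).drop (g u).length).drop (sectFun g u v).length
  rw [List.drop_drop, lsv, lu, luv, List.append_assoc]

end SectLemmas

/-! ### Auxiliary lemmas on the GGS generators -/

section GGSLemmas

set_option linter.unusedSectionVars false

variable {p : ℕ} [Fact p.Prime]

lemma rotPerm_mem (m : ZMod p) : rotPerm m ∈ AutT (ZMod p) := by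
  rw [mem_AutT]
  refine ⟨rfl, fun u x => ?_⟩
  cases u with
  | nil => exact ⟨x + m, rfl⟩
  | cons z w => exact ⟨x, rfl⟩

lemma rotPerm_mul (m m' : ZMod p) : rotPerm m * rotPerm m' = rotPerm (m + m') := by
  refine Equiv.ext fun w => ?_
  cases w with
  | nil => rfl
  | cons x v =>
      show (x + m' + m) :: v = (x + (m + m')) :: v
      rw [add_assoc, add_comm m' m]

lemma rotPerm_zero : rotPerm (0 : ZMod p) = 1 := by
  refine Equiv.ext fun w => ?_
  cases w with
  | nil => rfl
  | cons x v =>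
      show (x + 0) :: v = x :: v
      rw [add_zero]

lemma rotPerm_inv (m : ZMod p) : (rotPerm m)⁻¹ = rotPerm (-m) := by
  symm
  apply eq_inv_of_mul_eq_one_left
  rw [rotPerm_mul, neg_add_cancel, rotPerm_zero]

lemma rotPerm_cons (m x : ZMod p) (v : List (ZMod p)) :
    rotPerm m (x :: v) = (x + m) :: v := rfl

lemma rotPerm_pow (n : ℕ) : (rotPerm (1 : ZMod p)) ^ n = rotPerm (n : ZMod p) := by
  induction n with
  | zero => rw [pow_zero, Nat.cast_zero, rotPerm_zero]
  | succ k ih =>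
      rw [pow_succ, ih, rotPerm_mul, Nat.cast_succ]

lemma rotPerm_mem_ggs (m : ZMod p) (e : ZMod p → ZMod p) : rotPerm m ∈ ggsGroup p e := by
  have h1 : rotPerm (1 : ZMod p) ∈ ggsGroup p e :=
    Subgroup.subset_closure (Or.inl rfl)
  have h2 := pow_mem h1 m.val
  rwa [rotPerm_pow, ZMod.natCast_rightInverse m] at h2

lemma sect_rotPerm_single (m x : ZMod p) : sect (rotPerm m) [x] = 1 := by
  refine Equiv.ext fun v => ?_
  rw [sect_apply (rotPerm_mem m)]
  rfl

lemma sect_rotPerm (m x : ZMod p) (w : List (ZMod p)) :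
    sect (rotPerm m) (x :: w) = 1 := by
  have h : (x :: w : List (ZMod p)) = [x] ++ w := rfl
  rw [h, sect_append (rotPerm_mem m), sect_rotPerm_single, sect_one]

lemma ggsB_mem (e : ZMod p → ZMod p) : ggsB e ∈ AutT (ZMod p) := by
  rw [mem_AutT]
  refine ⟨rfl, fun u x => ?_⟩
  show ∃ y, ggsFun e (u ++ [x]) = ggsFun e u ++ [y]
  induction u with
  | nil =>
      refine ⟨x, ?_⟩
      by_cases h : x = 0 <;> simp [ggsFun, h, rotFun]
  | cons z w ih =>
      by_cases h : z = 0
      · obtain ⟨y, hy⟩ := ih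
        exact ⟨y, by simp [ggsFun, h, hy]⟩
      · cases w with
        | nil => exact ⟨x + e z, by simp [ggsFun, h, rotFun]⟩
        | cons c w' => exact ⟨x, by simp [ggsFun, h, rotFun]⟩

lemma ggsB_fix (e : ZMod p → ZMod p) (x : ZMod p) : ggsB e [x] = [x] := by
  show ggsFun e [x] = [x]
  by_cases h : x = 0 <;> simp [ggsFun, h, rotFun]

lemma sect_ggsB_zero (e : ZMod p → ZMod p) : sect (ggsB e) [(0 : ZMod p)] = ggsB e := by
  refine Equiv.ext fun v => ?_
  rw [sect_apply (ggsB_mem e)]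
  show (ggsFun e ((0 : ZMod p) :: v)).drop (ggsFun e [(0 : ZMod p)]).length = ggsFun e v
  simp [ggsFun]

lemma sect_ggsB_ne (e : ZMod p → ZMod p) (x : ZMod p) (hx : x ≠ 0) :
    sect (ggsB e) [x] = rotPerm (e x) := by
  refine Equiv.ext fun v => ?_
  rw [sect_apply (ggsB_mem e)]
  show (ggsFun e (x :: v)).drop (ggsFun e [x]).length = rotFun (e x) v
  simp [ggsFun, hx, rotFun]

lemma sect_ggsB_mem_ggs (e : ZMod p → ZMod p) :
    ∀ u : List (ZMod p), sect (ggsB e) u ∈ ggsGroup p e := by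
  intro u
  induction u with
  | nil =>
      rw [sect_nil (ggsB_mem e)]
      exact Subgroup.subset_closure (Or.inr rfl)
  | cons x w ih =>
      show sect (ggsB e) ([x] ++ w) ∈ _
      rw [sect_append (ggsB_mem e)]
      by_cases hx : x = 0
      · subst hx
        rw [sect_ggsB_zero]
        exact ih
      · rw [sect_ggsB_ne e x hx]
        cases w with
        | nil =>
            rw [sect_nil (rotPerm_mem _)]
            exact rotPerm_mem_ggs _ e
        | cons z v =>
            rw [sect_rotPerm]
            exact one_mem _

/-- The self-similarity closure: tree automorphisms all of whose sections lie in
the GGS-group. -/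
def ssClosure (p : ℕ) (e : ZMod p → ZMod p) : Subgroup (Equiv.Perm (List (ZMod p))) where
  carrier := {g | g ∈ AutT (ZMod p) ∧ ∀ u, sect g u ∈ ggsGroup p e}
  one_mem' := ⟨one_mem _, fun u => by rw [sect_one]; exact one_mem _⟩
  mul_mem' := by
    rintro f g ⟨hf, hf2⟩ ⟨hg, hg2⟩
    exact ⟨mul_mem hf hg, fun u => by rw [sect_mul hf hg]; exact mul_mem (hf2 _) (hg2 _)⟩
  inv_mem' := by
    rintro g ⟨hg, hg2⟩
    exact ⟨inv_mem hg, fun u => by rw [sect_inv hg]; exact inv_mem (hg2 _)⟩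

lemma ggs_le_ss (e : ZMod p → ZMod p) : ggsGroup p e ≤ ssClosure p e := by
  rw [ggsGroup, Subgroup.closure_le]
  rintro g (rfl | rfl)
  · refine ⟨rotPerm_mem 1, fun u => ?_⟩
    cases u with
    | nil => rw [sect_nil (rotPerm_mem 1)]; exact rotPerm_mem_ggs 1 e
    | cons x w => rw [sect_rotPerm]; exact one_mem _
  · exact ⟨ggsB_mem e, sect_ggsB_mem_ggs e⟩

lemma ggs_autT {e : ZMod p → ZMod p} {g : Equiv.Perm (List (ZMod p))}
    (hg : g ∈ ggsGroup p e) : g ∈ AutT (ZMod p) :=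
  (ggs_le_ss e hg).1

lemma ggs_sect_mem {e : ZMod p → ZMod p} {g : Equiv.Perm (List (ZMod p))}
    (hg : g ∈ ggsGroup p e) (u : List (ZMod p)) : sect g u ∈ ggsGroup p e :=
  (ggs_le_ss e hg).2 u

lemma ggs_rot_ex {e : ZMod p → ZMod p} {g : Equiv.Perm (List (ZMod p))}
    (hg : g ∈ ggsGroup p e) : ∃ m : ZMod p, ∀ x : ZMod p, g [x] = [x + m] := by
  have hg' : g ∈ Subgroup.closure {rotPerm (1 : ZMod p), ggsB e} := hg
  refine Subgroup.closure_induction ?_ ?_ ?_ ?_ hg'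
  · rintro g (rfl | rfl)
    · exact ⟨1, fun x => rfl⟩
    · exact ⟨0, fun x => by rw [add_zero]; exact ggsB_fix e x⟩
  · exact ⟨0, fun x => by rw [add_zero]; rfl⟩
  · rintro f g hf hg ⟨mf, hmf⟩ ⟨mg, hmg⟩
    exact ⟨mg + mf, fun x => by
      rw [Equiv.Perm.mul_apply, hmg, hmf, add_assoc]⟩
  · rintro g hg ⟨m, hm⟩
    refine ⟨-m, fun x => ?_⟩
    have h := hm (x + -m)
    rw [add_assoc, neg_add_cancel, add_zero] at h
    rw [← h, Equiv.Perm.inv_apply_self]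

end GGSLemmas

/-! ### The exponent maps `eF` (exponent of `a`) and `bF` (exponent of `b`) -/

section ExpMaps

set_option linter.unusedSectionVars false

variable {p : ℕ} [Fact p.Prime]

/-- The `a`-exponent of an element of the GGS-group: the amount by which it rotates
the first level. -/
def eF (g : Equiv.Perm (List (ZMod p))) : ZMod p := (g [0]).headD 0

/-- The `b`-exponent of an element of the GGS-group, computed from the rotation
amounts of its first-level sections. -/
noncomputable def bF (g : Equiv.Perm (List (ZMod p))) : ZMod p :=
  -∑ x : ZMod p, eF (sect g [x])

lemma ggs_rot {e : ZMod p → ZMod p} {g : Equiv.Perm (List (ZMod p))}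
    (hg : g ∈ ggsGroup p e) (x : ZMod p) : g [x] = [x + eF g] := by
  obtain ⟨m, hm⟩ := ggs_rot_ex hg
  have h0 : eF g = m := by
    show (g [0]).headD 0 = m
    rw [hm 0, zero_add]
    rfl
  rw [h0]
  exact hm x

lemma eF_one : eF (1 : Equiv.Perm (List (ZMod p))) = 0 := rfl

lemma eF_mul {e : ZMod p → ZMod p} {f g : Equiv.Perm (List (ZMod p))}
    (hf : f ∈ ggsGroup p e) (hg : g ∈ ggsGroup p e) :
    eF (f * g) = eF f + eF g := by
  have h : (f * g) [(0 : ZMod p)] = [0 + (eF g + eF f)] := by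
    rw [Equiv.Perm.mul_apply, ggs_rot hg, ggs_rot hf, add_assoc]
  show ((f * g) [(0 : ZMod p)]).headD 0 = eF f + eF g
  rw [h]
  show 0 + (eF g + eF f) = eF f + eF g
  rw [zero_add, add_comm]

lemma eF_inv {e : ZMod p → ZMod p} {g : Equiv.Perm (List (ZMod p))}
    (hg : g ∈ ggsGroup p e) : eF g⁻¹ = -eF g := by
  have h := ggs_rot hg (-eF g)
  rw [neg_add_cancel] at h
  have h2 : g⁻¹ [(0 : ZMod p)] = [-eF g] := by
    rw [← h, Equiv.Perm.inv_apply_self]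
  show (g⁻¹ [(0 : ZMod p)]).headD 0 = -eF g
  rw [h2]
  rfl

lemma ggs_rot_inv {e : ZMod p → ZMod p} {g : Equiv.Perm (List (ZMod p))}
    (hg : g ∈ ggsGroup p e) (x : ZMod p) : g⁻¹ [x] = [x + -eF g] := by
  rw [← eF_inv hg]
  exact ggs_rot (inv_mem hg) x

lemma bF_one : bF (1 : Equiv.Perm (List (ZMod p))) = 0 := by
  show -∑ x : ZMod p, eF (sect (1 : Equiv.Perm (List (ZMod p))) [x]) = 0
  have h : ∀ x : ZMod p, eF (sect (1 : Equiv.Perm (List (ZMod p))) [x]) = 0 := fun x => by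
    rw [sect_one]; rfl
  rw [Finset.sum_congr rfl fun x _ => h x]
  simp

lemma bF_mul {e : ZMod p → ZMod p} {f g : Equiv.Perm (List (ZMod p))}
    (hf : f ∈ ggsGroup p e) (hg : g ∈ ggsGroup p e) :
    bF (f * g) = bF f + bF g := by
  have hfA := ggs_autT hf
  have hgA := ggs_autT hg
  have key : ∀ x : ZMod p,
      eF (sect (f * g) [x]) = eF (sect f [x + eF g]) + eF (sect g [x]) := by
    intro x
    rw [sect_mul hfA hgA, ggs_rot hg x]
    exact eF_mul (ggs_sect_mem hf _) (ggs_sect_mem hg _)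
  show -∑ x : ZMod p, eF (sect (f * g) [x]) = bF f + bF g
  rw [Finset.sum_congr rfl fun x _ => key x, Finset.sum_add_distrib]
  have re : ∑ x : ZMod p, eF (sect f [x + eF g]) = ∑ y : ZMod p, eF (sect f [y]) :=
    Fintype.sum_equiv (Equiv.addRight (eF g)) _ _ (fun x => rfl)
  rw [re, neg_add]
  rfl

lemma bF_inv {e : ZMod p → ZMod p} {g : Equiv.Perm (List (ZMod p))}
    (hg : g ∈ ggsGroup p e) : bF g⁻¹ = -bF g := by
  have hgA := ggs_autT hg
  have key : ∀ x : ZMod p, eF (sect g⁻¹ [x]) = -eF (sect g [x + -eF g]) := by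
    intro x
    rw [sect_inv hgA, ggs_rot_inv hg x]
    exact eF_inv (ggs_sect_mem hg _)
  show -∑ x : ZMod p, eF (sect g⁻¹ [x]) = -bF g
  rw [Finset.sum_congr rfl fun x _ => key x, Finset.sum_neg_distrib]
  have re : ∑ x : ZMod p, eF (sect g [x + -eF g]) = ∑ y : ZMod p, eF (sect g [y]) :=
    Fintype.sum_equiv (Equiv.addRight (-eF g)) _ _ (fun x => rfl)
  rw [re, neg_neg]
  show ∑ y : ZMod p, eF (sect g [y]) = -(-∑ y : ZMod p, eF (sect g [y]))
  rw [neg_neg]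

lemma eF_rotPerm_one : eF (rotPerm (1 : ZMod p)) = 1 := by
  show ((0 : ZMod p) + 1) = 1
  rw [zero_add]

lemma eF_ggsB (e : ZMod p → ZMod p) : eF (ggsB e) = 0 := by
  show ((ggsB e) [(0 : ZMod p)]).headD 0 = 0
  rw [ggsB_fix]
  rfl

lemma bF_rotPerm_one : bF (rotPerm (1 : ZMod p)) = 0 := by
  show -∑ x : ZMod p, eF (sect (rotPerm (1 : ZMod p)) [x]) = 0
  have h : ∀ x : ZMod p, eF (sect (rotPerm (1 : ZMod p)) [x]) = 0 := fun x => by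
    rw [sect_rotPerm_single]; rfl
  rw [Finset.sum_congr rfl fun x _ => h x]
  simp

lemma bF_ggsB : bF (ggsB (fun _ => (1 : ZMod p))) = 1 := by
  have key : ∀ x : ZMod p,
      eF (sect (ggsB (fun _ => (1 : ZMod p))) [x]) = if x = 0 then 0 else 1 := by
    intro x
    by_cases hx : x = 0
    · subst hx
      rw [if_pos rfl, sect_ggsB_zero, eF_ggsB]
    · rw [if_neg hx, sect_ggsB_ne _ _ hx, eF_rotPerm_one]
  show -∑ x : ZMod p, eF (sect (ggsB (fun _ => (1 : ZMod p))) [x]) = 1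
  rw [Finset.sum_congr rfl fun x _ => key x]
  have h2 : ∀ x : ZMod p,
      (if x = 0 then (0 : ZMod p) else 1) = 1 - (if x = 0 then 1 else 0) := by
    intro x
    split_ifs <;> simp
  rw [Finset.sum_congr rfl fun x _ => h2 x, Finset.sum_sub_distrib,
    Finset.sum_ite_eq' Finset.univ (0 : ZMod p) (fun _ => (1 : ZMod p))]
  simp [Finset.sum_const, Finset.card_univ, ZMod.natCast_self]

/-- The key relation: for every `g` in the constant-vector GGS-group and every
first-level vertex `x`, `ε(g_x) + β(g_x) = β(g)`. -/
lemma ggs_KR {g : Equiv.Perm (List (ZMod p))}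
    (hg : g ∈ ggsGroup p (fun _ => (1 : ZMod p))) (x : ZMod p) :
    eF (sect g [x]) + bF (sect g [x]) = bF g := by
  revert x
  have hg' : g ∈ Subgroup.closure {rotPerm (1 : ZMod p), ggsB (fun _ => (1 : ZMod p))} := hg
  refine Subgroup.closure_induction ?_ ?_ ?_ ?_ hg'
  · rintro g (rfl | rfl) x
    · rw [show ([x] : List (ZMod p)) = x :: [] from rfl, sect_rotPerm, bF_rotPerm_one,
        eF_one, bF_one, add_zero]
    · by_cases hx : x = 0
      · subst hx
        rw [sect_ggsB_zero, eF_ggsB, bF_ggsB, zero_add]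
      · rw [sect_ggsB_ne _ _ hx, eF_rotPerm_one, bF_rotPerm_one, bF_ggsB, add_zero]
  · intro x
    rw [sect_one, eF_one, bF_one, add_zero]
  · rintro f g hf hg ihf ihg x
    have hf' : f ∈ ggsGroup p (fun _ => (1 : ZMod p)) := hf
    have hg' : g ∈ ggsGroup p (fun _ => (1 : ZMod p)) := hg
    rw [sect_mul (ggs_autT hf') (ggs_autT hg'), ggs_rot hg' x,
      eF_mul (ggs_sect_mem hf' _) (ggs_sect_mem hg' _),
      bF_mul (ggs_sect_mem hf' _) (ggs_sect_mem hg' _),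
      bF_mul hf' hg']
    linear_combination ihf (x + eF g) + ihg x
  · rintro g hg ih x
    have hg' : g ∈ ggsGroup p (fun _ => (1 : ZMod p)) := hg
    rw [sect_inv (ggs_autT hg'), ggs_rot_inv hg' x,
      eF_inv (ggs_sect_mem hg' _), bF_inv (ggs_sect_mem hg' _), bF_inv hg']
    linear_combination -ih (x + -eF g)

end ExpMaps

/-! ### Strong fractality and failure of super strong fractality -/

section MainArgument

set_option linter.unusedSectionVars false

variable {p : ℕ} [Fact p.Prime]

lemma conj_fix (j : ZMod p) :
    rotPerm j * ggsB (fun _ => (1 : ZMod p)) * (rotPerm j)⁻¹ ∈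
      stL (ggsGroup p (fun _ => (1 : ZMod p))) 1 := by
  have hbG : ggsB (fun _ => (1 : ZMod p)) ∈ ggsGroup p (fun _ => (1 : ZMod p)) :=
    Subgroup.subset_closure (Or.inr rfl)
  refine ⟨mul_mem (mul_mem (rotPerm_mem_ggs j _) hbG) (inv_mem (rotPerm_mem_ggs j _)), ?_⟩
  intro u hu
  cases u with
  | nil => simp at hu
  | cons z w =>
      have hw : w = [] := by
        simpa using hu
      subst hw
      show (rotPerm j * ggsB (fun _ => (1 : ZMod p)) * (rotPerm j)⁻¹) [z] = [z]
      rw [rotPerm_inv, Equiv.Perm.mul_apply, Equiv.Perm.mul_apply, rotPerm_cons,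
        ggsB_fix, rotPerm_cons, neg_add_cancel_right]

lemma conj_sect (j y : ZMod p) :
    sect (rotPerm j * ggsB (fun _ => (1 : ZMod p)) * (rotPerm j)⁻¹) [y]
      = sect (ggsB (fun _ => (1 : ZMod p))) [y + -j] := by
  have hb := ggsB_mem (fun _ => (1 : ZMod p))
  have hr := rotPerm_mem j
  rw [rotPerm_inv]
  rw [sect_mul (mul_mem hr hb) (rotPerm_mem (-j)), sect_mul hr hb]
  rw [show rotPerm (-j) [y] = [y + -j] from rfl]
  rw [show ([y] : List (ZMod p)) = y :: [] from rfl, sect_rotPerm, ggsB_fix,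
    sect_rotPerm_single, one_mul, mul_one]

lemma ggs_stronglyFractal : StronglyFractal (ggsGroup p (fun _ => (1 : ZMod p))) := by
  intro x
  apply Set.Subset.antisymm
  · rintro h ⟨g, hg, rfl⟩
    have hg' : g ∈ ggsGroup p (fun _ => (1 : ZMod p)) ∧
        ∀ u : List (ZMod p), u.length = 1 → g u = u := hg
    exact ggs_sect_mem hg'.1 [x]
  · intro h hh
    have hh' : h ∈ Subgroup.closure {rotPerm (1 : ZMod p), ggsB (fun _ => (1 : ZMod p))} := hh
    refine Subgroup.closure_induction ?_ ?_ ?_ ?_ hh'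
    · rintro g (rfl | rfl)
      · refine ⟨rotPerm (x + 1) * ggsB (fun _ => (1 : ZMod p)) * (rotPerm (x + 1))⁻¹,
          conj_fix (x + 1), ?_⟩
        show sect (rotPerm (x + 1) * ggsB (fun _ => (1 : ZMod p)) * (rotPerm (x + 1))⁻¹) [x]
          = rotPerm 1
        rw [conj_sect]
        have hne : x + -(x + 1) ≠ 0 := by
          have h1 : x + -(x + 1) = -1 := by ring
          rw [h1]
          exact neg_ne_zero.mpr one_ne_zero
        rw [sect_ggsB_ne _ _ hne]
      · refine ⟨rotPerm x * ggsB (fun _ => (1 : ZMod p)) * (rotPerm x)⁻¹,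
          conj_fix x, ?_⟩
        show sect (rotPerm x * ggsB (fun _ => (1 : ZMod p)) * (rotPerm x)⁻¹) [x]
          = ggsB (fun _ => (1 : ZMod p))
        rw [conj_sect, add_neg_cancel, sect_ggsB_zero]
    · exact ⟨1, one_mem _, sect_one [x]⟩
    · rintro h1 h2 hh1 hh2 ⟨c1, hc1, hs1⟩ ⟨c2, hc2, hs2⟩
      have hm1 : c1 ∈ ggsGroup p (fun _ => (1 : ZMod p)) ∧
          ∀ u : List (ZMod p), u.length = 1 → c1 u = u := hc1
      have hm2 : c2 ∈ ggsGroup p (fun _ => (1 : ZMod p)) ∧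
          ∀ u : List (ZMod p), u.length = 1 → c2 u = u := hc2
      have hs1' : sect c1 [x] = h1 := hs1
      have hs2' : sect c2 [x] = h2 := hs2
      refine ⟨c1 * c2, mul_mem (show c1 ∈ stL _ 1 from hc1) (show c2 ∈ stL _ 1 from hc2), ?_⟩
      show sect (c1 * c2) [x] = h1 * h2
      rw [sect_mul (ggs_autT hm1.1) (ggs_autT hm2.1), hm2.2 [x] rfl, hs1', hs2']
    · rintro h hh ⟨c, hc, hs⟩
      have hm : c ∈ ggsGroup p (fun _ => (1 : ZMod p)) ∧
          ∀ u : List (ZMod p), u.length = 1 → c u = u := hc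
      have hs' : sect c [x] = h := hs
      refine ⟨c⁻¹, inv_mem (show c ∈ stL _ 1 from hc), ?_⟩
      show sect c⁻¹ [x] = h⁻¹
      have hcx : c⁻¹ [x] = [x] := by
        conv_lhs => rw [← hm.2 [x] rfl]
        exact Equiv.Perm.inv_apply_self c [x]
      rw [sect_inv (ggs_autT hm.1), hcx, hs']

lemma ggs_not_ssf : ¬ SuperStronglyFractal (ggsGroup p (fun _ => (1 : ZMod p))) := by
  intro H
  have h2 := H 2 [0, 0] rfl
  have hb : ggsB (fun _ => (1 : ZMod p)) ∈
      (ggsGroup p (fun _ => (1 : ZMod p)) : Set (Equiv.Perm (List (ZMod p)))) :=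
    Subgroup.subset_closure (Or.inr rfl)
  rw [← h2] at hb
  obtain ⟨g, hgst, hsect⟩ := hb
  have hm : g ∈ ggsGroup p (fun _ => (1 : ZMod p)) ∧
      ∀ u : List (ZMod p), u.length = 2 → g u = u := hgst
  obtain ⟨hgG, hfix⟩ := hm
  have hA := ggs_autT hgG
  have hsect' : sect g [0, 0] = ggsB (fun _ => (1 : ZMod p)) := hsect
  -- `g` does not rotate the first level
  have heg : eF g = 0 := by
    have hspec := sect_spec hA [(0 : ZMod p)] [(0 : ZMod p)]
    rw [show ([(0 : ZMod p)] ++ [(0 : ZMod p)] : List (ZMod p)) = [0, 0] from rfl,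
      hfix [0, 0] rfl, ggs_rot hgG 0, List.singleton_append] at hspec
    injection hspec with h1 _
    rw [zero_add] at h1
    exact h1.symm
  have hfix1 : ∀ x : ZMod p, g [x] = [x] := fun x => by
    rw [ggs_rot hgG x, heg, add_zero]
  -- the first-level sections of `g` fix the first level
  have hsfix : ∀ x y : ZMod p, (sect g [x]) [y] = [y] := by
    intro x y
    have hspec := sect_spec hA [x] [y]
    rw [show ([x] ++ [y] : List (ZMod p)) = [x, y] from rfl, hfix [x, y] rfl, hfix1 x,
      List.singleton_append] at hspec
    injection hspec with _ h2'
    exact h2'.symm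
  have hes : ∀ x : ZMod p, eF (sect g [x]) = 0 := by
    intro x
    have h := ggs_rot (ggs_sect_mem hgG [x]) 0
    rw [hsfix x 0] at h
    injection h with h1 _
    rw [zero_add] at h1
    exact h1.symm
  have hbg : bF g = 0 := by
    show -∑ x : ZMod p, eF (sect g [x]) = 0
    rw [Finset.sum_congr rfl fun x _ => hes x]
    simp
  have hbs : ∀ x : ZMod p, bF (sect g [x]) = 0 := by
    intro x
    have h := ggs_KR hgG x
    rwa [hes x, zero_add, hbg] at h
  have h00 : sect (sect g [(0 : ZMod p)]) [(0 : ZMod p)] = ggsB (fun _ => (1 : ZMod p)) := by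
    rw [← sect_append hA [(0 : ZMod p)] [(0 : ZMod p)]]
    exact hsect'
  have hKR2 := ggs_KR (ggs_sect_mem hgG [(0 : ZMod p)]) 0
  rw [h00, eF_ggsB, bF_ggsB, hbs 0, zero_add] at hKR2
  exact one_ne_zero hKR2

end MainArgument

/-- The GGS-group with constant defining vector `e = (1, …, 1)` is
strongly fractal but not super strongly fractal. -/
theorem ggsGroup_constant_not_superStronglyFractal (p : ℕ) [Fact p.Prime] :
    StronglyFractal (ggsGroup p (fun _ => 1)) ∧
      ¬ SuperStronglyFractal (ggsGroup p (fun _ => 1)) :=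
  ⟨ggs_stronglyFractal, ggs_not_ssf⟩

end TreeFract
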